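/- Let m, n be nonnegative integers with n ≡ 2^{m+1} (mod 2^{m+2}) and n > 0. Then r_m(n) = r_m(n - 2^{m+1}) + Σ_{j=0}^{⌊m/2⌋} C(m+1, 2j+1) · r_m((n - (2j+1)·2^{m+1})/2). -/

import Mathlib

/-- The integer partitioned by the binary partition `α`, where `α i` is the
number of parts equal to `2 ^ i` (so `α i` is the `α_{i+1}` of the paper). -/
def binWeight (α : ℕ →₀ ℕ) : ℕ := α.sum fun i a => a * 2 ^ i

/-- `Pm m n` is the set of binary partitions of `n` satisfying the divisibility
conditions `2 ^ (m + 2 - i) ∣ α_i` for `1 ≤ i ≤ m + 1` (written here with the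
index shifted down by one).  For `n < 0` the set is empty. -/
def Pm (m : ℕ) (n : ℤ) : Set (ℕ →₀ ℕ) :=
  {α | (binWeight α : ℤ) = n ∧ ∀ i ≤ m, 2 ^ (m + 1 - i) ∣ α i}

/-- `r m n` is the number of binary partitions of `n` satisfying the divisibility
conditions `2 ^ (m + 2 - i) ∣ α_i` for `1 ≤ i ≤ m + 1`. -/
noncomputable def r (m : ℕ) (n : ℤ) : ℕ := Nat.card (Pm m n)


lemma binWeight_add (a b : ℕ →₀ ℕ) : binWeight (a + b) = binWeight a + binWeight b :=
  Finsupp.sum_add_index' (fun _ => zero_mul _) (fun _ _ _ => add_mul _ _ _)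

lemma binWeight_single (i c : ℕ) : binWeight (Finsupp.single i c) = c * 2 ^ i :=
  Finsupp.sum_single_index (zero_mul _)

lemma binWeight_zero : binWeight 0 = 0 := Finsupp.sum_zero_index

def binWeightHom : (ℕ →₀ ℕ) →+ ℕ := ⟨⟨binWeight, binWeight_zero⟩, fun a b => binWeight_add a b⟩

lemma binWeight_finsetSum {ι : Type*} (s : Finset ι) (g : ι → (ℕ →₀ ℕ)) :
    binWeight (∑ i ∈ s, g i) = ∑ i ∈ s, binWeight (g i) :=
  map_sum binWeightHom g s

lemma binWeight_embDomain (e : ℕ ↪ ℕ) (γ : ℕ →₀ ℕ) :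
    binWeight (Finsupp.embDomain e γ) = γ.sum fun i a => a * 2 ^ (e i) :=
  Finsupp.sum_embDomain

lemma term_le (γ : ℕ →₀ ℕ) (i : ℕ) : γ i * 2 ^ i ≤ binWeight γ := by
  by_cases h : i ∈ γ.support
  · exact Finset.single_le_sum (f := fun j => γ j * 2 ^ j) (fun _ _ => Nat.zero_le _) h
  · simp [Finsupp.notMem_support_iff.mp h]

lemma apply_le (γ : ℕ →₀ ℕ) (i : ℕ) : γ i ≤ binWeight γ :=
  le_trans (Nat.le_mul_of_pos_right _ (by positivity)) (term_le γ i)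

lemma apply_eq_zero_of_big {γ : ℕ →₀ ℕ} {k i : ℕ} (h : binWeight γ ≤ k) (hi : k < i) :
    γ i = 0 := by
  by_contra hne
  have h1 : 1 ≤ γ i := Nat.one_le_iff_ne_zero.mpr hne
  have : 2 ^ i ≤ binWeight γ := le_trans (by nlinarith [Nat.one_le_two_pow (n := i)]) (term_le γ i)
  have := Nat.lt_two_pow_self (n := i)
  omega

lemma finite_wle (k : ℕ) : {γ : ℕ →₀ ℕ | binWeight γ ≤ k}.Finite := by
  have : Set.InjOn (fun (γ : ℕ →₀ ℕ) (i : Fin (k+1)) => γ i) {γ : ℕ →₀ ℕ | binWeight γ ≤ k} := by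
    intro a ha b hb hab
    ext i
    rcases lt_or_ge i (k+1) with hi | hi
    · exact congrFun hab ⟨i, hi⟩
    · rw [apply_eq_zero_of_big ha (by omega), apply_eq_zero_of_big hb (by omega)]
  apply Set.Finite.of_finite_image _ this
  have : ∀ γ ∈ {γ : ℕ →₀ ℕ | binWeight γ ≤ k}, ∀ i : Fin (k+1), γ i ≤ k :=
    fun γ hγ i => le_trans (apply_le γ i) hγ
  apply Set.Finite.subset (Set.finite_Iic (fun _ : Fin (k+1) => k))
  rintro _ ⟨γ, hγ, rfl⟩
  intro i
  exact this γ hγ i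

def Fset (m : ℕ) (z : ℤ) : Set ((Fin (m+1) → ℕ) × (ℕ →₀ ℕ)) :=
  {p | ((∑ i, p.1 i : ℕ) + (binWeight p.2 : ℕ) : ℤ) = z}

noncomputable def f (m : ℕ) (z : ℤ) : ℕ := Nat.card (Fset m z)

lemma finite_Pm (m : ℕ) (n : ℤ) : (Pm m n).Finite := by
  rcases lt_or_ge n 0 with h | h
  · convert Set.finite_empty
    ext α
    simp only [Pm, Set.mem_setOf_eq, Set.mem_empty_iff_false, iff_false]
    rintro ⟨hw, -⟩
    omega
  · apply Set.Finite.subset (finite_wle n.toNat)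
    rintro α ⟨hw, -⟩
    simp only [Set.mem_setOf_eq]
    omega

lemma finite_Fset (m : ℕ) (z : ℤ) : (Fset m z).Finite := by
  rcases lt_or_ge z 0 with h | h
  · convert Set.finite_empty
    ext p
    simp only [Fset, Set.mem_setOf_eq, Set.mem_empty_iff_false, iff_false]
    intro hw
    omega
  · apply Set.Finite.subset
      (Set.Finite.prod (Set.Finite.pi (fun _ : Fin (m+1) => Set.finite_Iic z.toNat))
        (finite_wle z.toNat))
    rintro ⟨β, γ⟩ hp
    simp only [Fset, Set.mem_setOf_eq] at hp
    constructor
    · intro i _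
      simp only [Set.mem_Iic]
      have : β i ≤ ∑ j, β j := Finset.single_le_sum (fun _ _ => Nat.zero_le _) (Finset.mem_univ i)
      omega
    · simp only [Set.mem_setOf_eq]
      omega


variable {m : ℕ}

def emb (m : ℕ) : ℕ ↪ ℕ := ⟨fun i => i + (m+1), add_left_injective (m+1)⟩

noncomputable def recomp (m : ℕ) (β : Fin (m+1) → ℕ) (g : ℕ →₀ ℕ) : ℕ →₀ ℕ :=
  (∑ i : Fin (m+1), Finsupp.single (i : ℕ) (2 ^ (m + 1 - (i : ℕ)) * β i)) +
    Finsupp.embDomain (emb m) g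

lemma recomp_apply_low (β : Fin (m+1) → ℕ) (g : ℕ →₀ ℕ) (i : Fin (m+1)) :
    recomp m β g i = 2 ^ (m + 1 - (i : ℕ)) * β i := by
  have h1 : Finsupp.embDomain (emb m) g (i : ℕ) = 0 := by
    apply Finsupp.embDomain_notin_range
    rintro ⟨j, hj⟩
    simp only [emb, Function.Embedding.coeFn_mk] at hj
    omega
  have h2 : (∑ j : Fin (m+1), Finsupp.single (j : ℕ) (2 ^ (m + 1 - (j : ℕ)) * β j)) (i : ℕ)
      = 2 ^ (m + 1 - (i : ℕ)) * β i := by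
    rw [Finsupp.finset_sum_apply]
    rw [Finset.sum_eq_single i]
    · simp
    · intro j _ hj
      rw [Finsupp.single_apply_eq_zero.mpr]
      intro hji
      exact absurd (Fin.ext (by omega)) hj
    · simp
  simp only [recomp, Finsupp.add_apply, h1, h2, add_zero]

lemma recomp_apply_high (β : Fin (m+1) → ℕ) (g : ℕ →₀ ℕ) (j : ℕ) :
    recomp m β g (j + (m + 1)) = g j := by
  have h1 : Finsupp.embDomain (emb m) g (j + (m+1)) = g j := by
    have : j + (m+1) = emb m j := rfl
    rw [this, Finsupp.embDomain_apply_self]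
  have h2 : (∑ i : Fin (m+1), Finsupp.single (i : ℕ) (2 ^ (m + 1 - (i : ℕ)) * β i)) (j + (m+1))
      = 0 := by
    rw [Finsupp.finset_sum_apply]
    apply Finset.sum_eq_zero
    intro i _
    rw [Finsupp.single_apply_eq_zero.mpr]
    intro h
    omega
  simp only [recomp, Finsupp.add_apply, h1, h2, zero_add]

lemma binWeight_recomp (β : Fin (m+1) → ℕ) (g : ℕ →₀ ℕ) :
    binWeight (recomp m β g) = 2 ^ (m + 1) * ((∑ i, β i) + binWeight g) := by
  rw [recomp, binWeight_add, binWeight_finsetSum, binWeight_embDomain]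
  have h1 : ∀ i : Fin (m+1), binWeight (Finsupp.single (i : ℕ) (2 ^ (m + 1 - (i : ℕ)) * β i))
      = 2 ^ (m+1) * β i := by
    intro i
    rw [binWeight_single]
    have h : m + 1 - (i : ℕ) + (i : ℕ) = m + 1 := by omega
    rw [mul_assoc, mul_comm (β i), ← mul_assoc, ← pow_add, h]
  have h2 : (g.sum fun i a => a * 2 ^ (emb m i)) = 2 ^ (m+1) * binWeight g := by
    rw [binWeight, Finsupp.mul_sum]
    apply Finsupp.sum_congr
    intro i _
    show g i * 2 ^ (i + (m+1)) = 2 ^ (m+1) * (g i * 2 ^ i)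
    rw [pow_add]; ring
  rw [Finset.sum_congr rfl (fun i _ => h1 i), h2, ← Finset.mul_sum, mul_add]

lemma decomp (α : ℕ →₀ ℕ) (hd : ∀ i ≤ m, 2 ^ (m + 1 - i) ∣ α i) :
    recomp m (fun i => α i / 2 ^ (m + 1 - (i : ℕ)))
      (Finsupp.comapDomain (· + (m+1)) α ((add_left_injective (m+1)).injOn)) = α := by
  ext i
  rcases lt_or_ge i (m+1) with hi | hi
  · have h := recomp_apply_low (m := m) (fun i => α i / 2 ^ (m + 1 - (i : ℕ)))
      (Finsupp.comapDomain (· + (m+1)) α ((add_left_injective (m+1)).injOn)) ⟨i, hi⟩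
    simp only at h
    rw [h, Nat.mul_div_cancel' (hd i (by omega))]
  · have hi' : i = (i - (m+1)) + (m+1) := by omega
    rw [hi', recomp_apply_high, Finsupp.comapDomain_apply]

lemma L1 (m : ℕ) (z : ℤ) : r m (2 ^ (m + 1) * z) = f m z := by
  apply Nat.card_congr
  have h2 : (2 : ℤ) ^ (m+1) ≠ 0 := by positivity
  refine ⟨fun x => ⟨(fun i => x.1 i / 2 ^ (m + 1 - (i : ℕ)),
      Finsupp.comapDomain (· + (m+1)) x.1 ((add_left_injective (m+1)).injOn)), ?_⟩,
    fun p => ⟨recomp m p.1.1 p.1.2, ?_, ?_⟩, ?_, ?_⟩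
  · obtain ⟨α, hw, hd⟩ := x
    have key := binWeight_recomp (m := m) (fun i => α i / 2 ^ (m + 1 - (i : ℕ)))
      (Finsupp.comapDomain (· + (m+1)) α ((add_left_injective (m+1)).injOn))
    rw [decomp α hd] at key
    show ((∑ i : Fin (m+1), α i / 2 ^ (m + 1 - (i : ℕ)) : ℕ) : ℤ) +
      ((binWeight (Finsupp.comapDomain (· + (m+1)) α ((add_left_injective (m+1)).injOn)) : ℕ) : ℤ)
        = z
    set S := (∑ i : Fin (m+1), α i / 2 ^ (m + 1 - (i : ℕ)) : ℕ) with hS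
    set W := binWeight (Finsupp.comapDomain (· + (m+1)) α ((add_left_injective (m+1)).injOn))
      with hW
    have key' : (binWeight α : ℤ) = (2 : ℤ) ^ (m+1) * ((S : ℤ) + (W : ℤ)) := by
      rw [key]; push_cast; ring
    rw [hw] at key'
    exact (mul_left_cancel₀ h2 key').symm
  · obtain ⟨⟨β, g⟩, hp⟩ := p
    have hw : ((∑ i, β i : ℕ) : ℤ) + ((binWeight g : ℕ) : ℤ) = z := hp
    show (binWeight (recomp m β g) : ℤ) = 2 ^ (m+1) * z
    rw [binWeight_recomp, ← hw]
    push_cast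
    ring
  · obtain ⟨⟨β, g⟩, hp⟩ := p
    intro i hi
    have h := recomp_apply_low (m := m) β g ⟨i, by omega⟩
    simp only at h
    rw [h]
    exact dvd_mul_right _ _
  · rintro ⟨α, hw, hd⟩
    exact Subtype.ext (decomp α hd)
  · rintro ⟨⟨β, g⟩, hp⟩
    refine Subtype.ext (Prod.ext ?_ ?_)
    · funext i
      have h := recomp_apply_low (m := m) β g i
      simp only
      rw [h, Nat.mul_div_cancel_left _ (by positivity)]
    · ext j
      simp only
      rw [Finsupp.comapDomain_apply]
      exact recomp_apply_high β g j

def sucEmb : ℕ ↪ ℕ := ⟨Nat.succ, Nat.succ_injective⟩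

lemma binWeight_shift (g : ℕ →₀ ℕ) :
    binWeight (Finsupp.embDomain sucEmb g) = 2 * binWeight g := by
  rw [binWeight_embDomain, binWeight, Finsupp.mul_sum]
  apply Finsupp.sum_congr
  intro i _
  show g i * 2 ^ (Nat.succ i) = 2 * (g i * 2 ^ i)
  rw [pow_succ]; ring

lemma shift_decomp (γ : ℕ →₀ ℕ) (h0 : γ 0 = 0) :
    Finsupp.embDomain sucEmb (Finsupp.comapDomain Nat.succ γ (Nat.succ_injective.injOn)) = γ := by
  have h : ↑γ.support ⊆ Set.range (sucEmb : ℕ ↪ ℕ) := by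
    intro i hi
    simp only [Finset.coe_sort_coe, Finsupp.mem_support_iff, Finset.mem_coe] at hi
    have : i ≠ 0 := by rintro rfl; exact hi h0
    exact ⟨i - 1, by simp only [sucEmb, Function.Embedding.coeFn_mk]; omega⟩
  exact Finsupp.embDomain_comapDomain h

lemma sum_parity (β : Fin (m+1) → ℕ) :
    (∑ i, β i) = 2 * (∑ i, β i / 2) + (Finset.univ.filter (fun i => Odd (β i))).card := by
  rw [Finset.card_filter, Finset.mul_sum, ← Finset.sum_add_distrib]
  apply Finset.sum_congr rfl
  intro i _
  by_cases h : Odd (β i) <;> simp only [h, if_true, if_false] <;> rw [Nat.odd_iff] at * <;> omega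

def S2set (m : ℕ) (z : ℤ) : Set ((Fin (m+1) → ℕ) × (ℕ →₀ ℕ)) :=
  {p | p ∈ Fset m z ∧ p.2 0 = 0}

lemma Todd {z : ℤ} (hz : Odd z) {β : Fin (m+1) → ℕ} {γ : ℕ →₀ ℕ}
    (hw : ((∑ i, β i : ℕ) : ℤ) + ((binWeight γ : ℕ) : ℤ) = z) (h0 : γ 0 = 0) :
    Odd (Finset.univ.filter (fun i => Odd (β i))).card := by
  have hβ := sum_parity β
  have hγ : binWeight γ = 2 * binWeight (Finsupp.comapDomain Nat.succ γ
      (Nat.succ_injective.injOn)) := by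
    conv_lhs => rw [← shift_decomp γ h0]
    rw [binWeight_shift]
  rw [Int.odd_iff] at hz
  rw [Nat.odd_iff]
  omega

noncomputable def cmap (m : ℕ) (z : ℤ) (hz : Odd z) :
    ↥(S2set m z) → {T : Finset (Fin (m+1)) // Odd T.card} :=
  fun p => ⟨Finset.univ.filter (fun i => Odd (p.1.1 i)), Todd hz p.2.1 p.2.2⟩

lemma zero_notmem_range_sucEmb : (0 : ℕ) ∉ Set.range (sucEmb : ℕ ↪ ℕ) := by
  rintro ⟨j, hj⟩
  exact Nat.succ_ne_zero j hj

lemma sum_ite_card (T : Finset (Fin (m+1))) :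
    (∑ i, (if i ∈ T then 1 else 0)) = T.card := by
  rw [Finset.sum_ite_mem, Finset.univ_inter, Finset.card_eq_sum_ones]

noncomputable def fibEquiv (m : ℕ) (z : ℤ) (hz : Odd z)
    (T : {T : Finset (Fin (m+1)) // Odd T.card}) :
    {p : ↥(S2set m z) // cmap m z hz p = T} ≃ ↥(Fset m ((z - T.1.card) / 2)) := by
  refine ⟨fun p => ⟨(fun i => p.1.1.1 i / 2,
      Finsupp.comapDomain Nat.succ p.1.1.2 (Nat.succ_injective.injOn)), ?_⟩,
    fun q => ⟨⟨(fun i => 2 * q.1.1 i + if i ∈ T.1 then 1 else 0,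
      Finsupp.embDomain sucEmb q.1.2), ?_, ?_⟩, ?_⟩, ?_, ?_⟩
  · -- toFun membership
    obtain ⟨⟨⟨β, γ⟩, hmem, h0⟩, hc⟩ := p
    have hw : ((∑ i, β i : ℕ) : ℤ) + ((binWeight γ : ℕ) : ℤ) = z := hmem
    have hT : Finset.univ.filter (fun i => Odd (β i)) = T.1 := congrArg Subtype.val hc
    have hβ := sum_parity β
    rw [hT] at hβ
    have hγ : binWeight γ = 2 * binWeight (Finsupp.comapDomain Nat.succ γ
        (Nat.succ_injective.injOn)) := by
      conv_lhs => rw [← shift_decomp γ h0]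
      rw [binWeight_shift]
    show ((∑ i, β i / 2 : ℕ) : ℤ) + ((binWeight (Finsupp.comapDomain Nat.succ γ
        (Nat.succ_injective.injOn)) : ℕ) : ℤ) = (z - T.1.card) / 2
    have h2 : z - (T.1.card : ℤ) = 2 * (((∑ i, β i / 2 : ℕ) : ℤ) +
        ((binWeight (Finsupp.comapDomain Nat.succ γ (Nat.succ_injective.injOn)) : ℕ) : ℤ)) := by
      omega
    rw [h2, Int.mul_ediv_cancel_left _ two_ne_zero]
  · -- invFun membership in Fset m z
    obtain ⟨⟨β', γ'⟩, hq⟩ := q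
    have hq' : ((∑ i, β' i : ℕ) : ℤ) + ((binWeight γ' : ℕ) : ℤ) = (z - T.1.card) / 2 := hq
    have hsum : (∑ i, (2 * β' i + if i ∈ T.1 then 1 else 0)) = 2 * (∑ i, β' i) + T.1.card := by
      rw [Finset.sum_add_distrib, ← Finset.mul_sum, sum_ite_card]
    have hsh : binWeight (Finsupp.embDomain sucEmb γ') = 2 * binWeight γ' := binWeight_shift γ'
    have hdvd : (2 : ℤ) ∣ (z - T.1.card) := by
      have hc : Odd ((T.1.card : ℕ) : ℤ) := Int.odd_coe_nat _ |>.mpr T.2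
      exact (Odd.sub_odd hz hc).two_dvd
    have h2 : 2 * ((z - (T.1.card : ℤ)) / 2) = z - T.1.card := Int.mul_ediv_cancel' hdvd
    show ((∑ i, (2 * β' i + if i ∈ T.1 then 1 else 0) : ℕ) : ℤ) +
        ((binWeight (Finsupp.embDomain sucEmb γ') : ℕ) : ℤ) = z
    omega
  · -- invFun second coordinate vanishes at 0
    exact Finsupp.embDomain_notin_range _ _ _ zero_notmem_range_sucEmb
  · -- cmap of invFun = T
    apply Subtype.ext
    show Finset.univ.filter (fun i => Odd (2 * q.1.1 i + if i ∈ T.1 then 1 else 0)) = T.1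
    ext i
    simp only [Finset.mem_filter, Finset.mem_univ, true_and, Nat.odd_iff]
    by_cases h : i ∈ T.1 <;> simp [h] <;> omega
  · -- left_inv
    rintro ⟨⟨⟨β, γ⟩, hmem, h0⟩, hc⟩
    have hT : Finset.univ.filter (fun i => Odd (β i)) = T.1 := congrArg Subtype.val hc
    apply Subtype.ext
    apply Subtype.ext
    apply Prod.ext
    · funext i
      show 2 * (β i / 2) + (if i ∈ T.1 then 1 else 0) = β i
      rw [← hT]
      by_cases h : Odd (β i) <;>
        simp only [Finset.mem_filter, Finset.mem_univ, true_and, h, if_true, if_false] <;>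
        rw [Nat.odd_iff] at h <;> omega
    · exact shift_decomp γ h0
  · -- right_inv
    rintro ⟨⟨β', γ'⟩, hq⟩
    apply Subtype.ext
    apply Prod.ext
    · funext i
      show (2 * β' i + if i ∈ T.1 then 1 else 0) / 2 = β' i
      by_cases h : i ∈ T.1 <;> simp [h] <;> omega
    · ext j
      show Finsupp.embDomain sucEmb γ' (Nat.succ j) = γ' j
      exact Finsupp.embDomain_apply_self _ _ _

def S1set (m : ℕ) (z : ℤ) : Set ((Fin (m+1) → ℕ) × (ℕ →₀ ℕ)) :=
  {p | p ∈ Fset m z ∧ p.2 0 ≠ 0}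

noncomputable def S1equiv (m : ℕ) (z : ℤ) : ↥(Fset m (z - 1)) ≃ ↥(S1set m z) := by
  refine ⟨fun q => ⟨(q.1.1, q.1.2 + Finsupp.single 0 1), ?_, ?_⟩,
    fun p => ⟨(p.1.1, p.1.2 - Finsupp.single 0 1), ?_⟩, ?_, ?_⟩
  · obtain ⟨⟨β, γ⟩, hq⟩ := q
    have hq' : ((∑ i, β i : ℕ) : ℤ) + ((binWeight γ : ℕ) : ℤ) = z - 1 := hq
    show ((∑ i, β i : ℕ) : ℤ) + ((binWeight (γ + Finsupp.single 0 1) : ℕ) : ℤ) = z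
    rw [binWeight_add, binWeight_single, pow_zero, mul_one]
    push_cast at hq' ⊢
    omega
  · simp [Finsupp.add_apply]
  · obtain ⟨⟨β, γ⟩, hmem, h0⟩ := p
    have hmem' : ((∑ i, β i : ℕ) : ℤ) + ((binWeight γ : ℕ) : ℤ) = z := hmem
    have h0' : γ 0 ≠ 0 := h0
    have hle : Finsupp.single 0 1 ≤ γ := Finsupp.single_le_iff.mpr (by
      show 1 ≤ γ 0; omega)
    have hdec : (γ - Finsupp.single 0 1) + Finsupp.single 0 1 = γ := tsub_add_cancel_of_le hle
    have hbw : binWeight γ = binWeight (γ - Finsupp.single 0 1) + 1 := by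
      conv_lhs => rw [← hdec]
      rw [binWeight_add, binWeight_single, pow_zero, mul_one]
    show ((∑ i, β i : ℕ) : ℤ) + ((binWeight (γ - Finsupp.single 0 1) : ℕ) : ℤ) = z - 1
    omega
  · rintro ⟨⟨β, γ⟩, hq⟩
    exact Subtype.ext (Prod.ext rfl (add_tsub_cancel_right _ _))
  · rintro ⟨⟨β, γ⟩, hmem, h0⟩
    have h0' : γ 0 ≠ 0 := h0
    have hle : Finsupp.single 0 1 ≤ γ := Finsupp.single_le_iff.mpr (by
      show 1 ≤ γ 0; omega)
    exact Subtype.ext (Prod.ext rfl (tsub_add_cancel_of_le hle))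

lemma L2 (m : ℕ) (z : ℤ) (hz : Odd z) :
    f m z = f m (z - 1) + ∑ j ∈ Finset.range (m / 2 + 1),
      (m + 1).choose (2 * j + 1) * f m ((z - ((2 * j + 1 : ℕ) : ℤ)) / 2) := by
  classical
  have hunion : Fset m z = S1set m z ∪ S2set m z := by
    ext p
    by_cases h : p.2 0 = 0 <;> simp [S1set, S2set, h]
  have hdisj : Disjoint (S1set m z) (S2set m z) := by
    rw [Set.disjoint_left]
    rintro p ⟨-, h⟩ ⟨-, h'⟩
    exact h h'
  have hf1 : (S1set m z).Finite := (finite_Fset m z).subset (fun p hp => hp.1)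
  have hf2 : (S2set m z).Finite := (finite_Fset m z).subset (fun p hp => hp.1)
  have hsplit : f m z = Nat.card (S1set m z) + Nat.card (S2set m z) := by
    rw [f, Nat.card_coe_set_eq, Nat.card_coe_set_eq, Nat.card_coe_set_eq, hunion,
      Set.ncard_union_eq hdisj hf1 hf2]
  have hcard1 : Nat.card (S1set m z) = f m (z - 1) := (Nat.card_congr (S1equiv m z)).symm
  -- S2 count via sigma
  haveI : ∀ T : {T : Finset (Fin (m+1)) // Odd T.card},
      Fintype ↥(Fset m ((z - T.1.card) / 2)) := fun T => (finite_Fset _ _).fintype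
  have e2 : ↥(S2set m z) ≃
      Σ T : {T : Finset (Fin (m+1)) // Odd T.card}, ↥(Fset m ((z - T.1.card) / 2)) :=
    (Equiv.sigmaFiberEquiv (cmap m z hz)).symm.trans
      (Equiv.sigmaCongrRight (fibEquiv m z hz))
  have hcard2 : Nat.card (S2set m z) =
      ∑ T : {T : Finset (Fin (m+1)) // Odd T.card}, f m ((z - T.1.card) / 2) := by
    rw [Nat.card_congr e2, Nat.card_eq_fintype_card, Fintype.card_sigma]
    exact Finset.sum_congr rfl (fun T _ => (Nat.card_eq_fintype_card).symm)
  -- regroup the sum over odd subsets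
  have halg : (∑ T : {T : Finset (Fin (m+1)) // Odd T.card}, f m ((z - T.1.card) / 2)) =
      ∑ j ∈ Finset.range (m / 2 + 1),
        (m + 1).choose (2 * j + 1) * f m ((z - ((2 * j + 1 : ℕ) : ℤ)) / 2) := by
    rw [← Finset.sum_subtype (Finset.univ.filter (fun T : Finset (Fin (m+1)) => Odd T.card))
      (fun T => by simp) (fun T => f m ((z - T.card) / 2))]
    rw [Finset.sum_filter]
    rw [← Finset.powerset_univ]
    rw [Finset.sum_powerset]
    have hcuniv : (Finset.univ : Finset (Fin (m+1))).card = m + 1 := by simp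
    rw [hcuniv]
    have hinner : ∀ k, (∑ t ∈ Finset.powersetCard k (Finset.univ : Finset (Fin (m+1))),
        (if Odd t.card then f m ((z - t.card) / 2) else 0)) =
        (m + 1).choose k * (if Odd k then f m ((z - (k : ℤ)) / 2) else 0) := by
      intro k
      rw [Finset.sum_congr rfl (fun t ht => by
        rw [Finset.mem_powersetCard_univ.mp ht]), Finset.sum_const,
        Finset.card_powersetCard, hcuniv, smul_eq_mul]
    rw [Finset.sum_congr rfl (fun k _ => hinner k)]
    have hpush : ∀ k, (m + 1).choose k * (if Odd k then f m ((z - (k : ℤ)) / 2) else 0) =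
        if Odd k then (m + 1).choose k * f m ((z - (k : ℤ)) / 2) else 0 := by
      intro k
      by_cases h : Odd k <;> simp [h]
    rw [Finset.sum_congr rfl (fun k _ => hpush k), ← Finset.sum_filter]
    refine Finset.sum_nbij' (fun k => k / 2) (fun u => 2 * u + 1) ?_ ?_ ?_ ?_ ?_
    · intro k hk
      simp only [Finset.mem_filter, Finset.mem_range, Nat.odd_iff] at hk
      simp only [Finset.mem_range]
      omega
    · intro u hu
      simp only [Finset.mem_range] at hu
      simp only [Finset.mem_filter, Finset.mem_range, Nat.odd_iff]
      omega
    · intro k hk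
      simp only [Finset.mem_filter, Finset.mem_range, Nat.odd_iff] at hk
      show 2 * (k / 2) + 1 = k
      omega
    · intro u hu
      show (2 * u + 1) / 2 = u
      omega
    · intro k hk
      simp only [Finset.mem_filter, Finset.mem_range, Nat.odd_iff] at hk
      have : 2 * (k / 2) + 1 = k := by omega
      rw [this]
  rw [hsplit, hcard1, hcard2, halg]

theorem stmt0 (m n : ℕ) (hpos : 0 < n) (hmod : n % 2 ^ (m + 2) = 2 ^ (m + 1)) :
    r m n = r m ((n : ℤ) - 2 ^ (m + 1)) +
      ∑ j ∈ Finset.range (m / 2 + 1),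
        (m + 1).choose (2 * j + 1) *
          r m (((n : ℤ) - (2 * j + 1) * 2 ^ (m + 1)) / 2) := by
  set q := n / 2 ^ (m + 2) with hq
  have hn : n = 2 ^ (m + 1) * (2 * q + 1) := by
    have hdm := Nat.div_add_mod n (2 ^ (m + 2))
    rw [hmod, ← hq] at hdm
    have hp : (2 : ℕ) ^ (m + 2) = 2 ^ (m + 1) * 2 := by ring
    rw [hp] at hdm
    rw [← hdm]
    ring
  set Nz : ℤ := 2 * (q : ℤ) + 1 with hNz
  have h1 : (n : ℤ) = 2 ^ (m + 1) * Nz := by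
    rw [hNz]
    push_cast [hn]
    ring
  have hodd : Odd Nz := by
    rw [hNz]
    exact ⟨q, by ring⟩
  have hr1 : r m n = f m Nz := by rw [h1, L1]
  have hr2 : r m ((n : ℤ) - 2 ^ (m + 1)) = f m (Nz - 1) := by
    have h : (n : ℤ) - 2 ^ (m + 1) = 2 ^ (m + 1) * (Nz - 1) := by rw [h1]; ring
    rw [h, L1]
  have hr3 : ∀ j : ℕ, r m (((n : ℤ) - (2 * j + 1) * 2 ^ (m + 1)) / 2) =
      f m ((Nz - ((2 * j + 1 : ℕ) : ℤ)) / 2) := by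
    intro j
    have e1 : ((n : ℤ) - (2 * j + 1) * 2 ^ (m + 1)) = 2 * (2 ^ (m + 1) * ((q : ℤ) - j)) := by
      rw [h1, hNz]; push_cast; ring
    have e2 : (Nz - ((2 * j + 1 : ℕ) : ℤ)) = 2 * ((q : ℤ) - j) := by
      rw [hNz]; push_cast; ring
    rw [e1, Int.mul_ediv_cancel_left _ two_ne_zero, e2, Int.mul_ediv_cancel_left _ two_ne_zero,
      L1]
  rw [hr1, L2 m Nz hodd, hr2]
  congr 1
  exact Finset.sum_congr rfl (fun j _ => by rw [hr3 j])
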